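/- For every holomorphic tangent vector field Z on M one has g(D_Z N, N̄) = g([T, Z], T), where [T,Z] is the Lie bracket (computed via smooth extensions; its value along M is independent of the extensions). -/

import Mathlib

noncomputable section
open scoped BigOperators

/-- `ℂ^{n+1}`, identified with `ℝ^{2n+2}` via its real structure. -/
abbrev E (n : ℕ) : Type := EuclideanSpace ℂ (Fin (n + 1))

/-- The standard complex structure: multiplication by `i`. -/
def J {n : ℕ} (v : E n) : E n := Complex.I • v

/-- The real inner ℂ product `⟨x, y⟩ = Re ⟪x, y⟫`. -/
def rI {n : ℕ} (x y : E n) : ℝ := (inner ℂ x y : ℂ).re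

/-- The (real) tangent space at `p` of a hypersurface with unit normal `ν`. -/
def tangAt {n : ℕ} (ν : E n → E n) (p : E n) : Set (E n) := {X | rI (ν p) X = 0}

/-- `M` is a smooth embedded real hypersurface of `ℂ^{n+1}` (locally a regular zero
set of a smooth real function), oriented by the smooth unit normal field `ν`
(extended smoothly to the ambient space). -/
def IsHypersurface {n : ℕ} (M : Set (E n)) (ν : E n → E n) : Prop :=
  ContDiff ℝ (⊤ : ℕ∞) ν ∧ (∀ p ∈ M, ‖ν p‖ = 1) ∧
    ∀ p ∈ M, ∃ (V : Set (E n)) (F : E n → ℝ), IsOpen V ∧ p ∈ V ∧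
      ContDiffOn ℝ (⊤ : ℕ∞) F V ∧ (M ∩ V = {z ∈ V | F z = 0}) ∧
      ∀ z ∈ M ∩ V, ∀ X : E n, (fderiv ℝ F z X = 0 ↔ X ∈ tangAt ν z)

/-- The horizontal (maximal complex) subspace `H_p = {X ∈ T_pM : JX ∈ T_pM}`. -/
def horizAt {n : ℕ} (ν : E n → E n) (p : E n) : Set (E n) :=
  {X | X ∈ tangAt ν p ∧ J X ∈ tangAt ν p}

/-- The second fundamental form `h(X,Y) = ⟨X, ∂_Y ν⟩`. -/
def sff {n : ℕ} (ν : E n → E n) (p : E n) (X Y : E n) : ℝ :=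
  rI X (fderiv ℝ ν p Y)

/-- The family `X_1, …, X_n, J X_1, …, J X_n`. -/
def combined {n : ℕ} (X : Fin n → E n) : (Fin n ⊕ Fin n) → E n :=
  Sum.elim X (fun α => J (X α))

/-- `{X_1, …, X_n, J X_1, …, J X_n}` is an orthonormal basis of the horizontal
space at `p` (w.r.t. the real inner ℂ product). -/
def IsHorizONB {n : ℕ} (ν : E n → E n) (p : E n) (X : Fin n → E n) : Prop :=
  (∀ α, X α ∈ horizAt ν p) ∧
  (∀ i j, rI (combined X i) (combined X j) = if i = j then 1 else 0) ∧
  (∀ Y ∈ horizAt ν p, Y ∈ Submodule.span ℝ (Set.range (combined X)))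

/-! ## Complexified tangent vectors
A complexified vector `X + iY` (the complexification unit `i` is distinct from
the complex structure `J`) is modelled as the pair `(X, Y)`. -/

/-- Complexified vectors of `ℂ^{n+1}`: `(X, Y)` stands for `X + iY`. -/
abbrev CV (n : ℕ) : Type := E n × E n

/-- Conjugation `X + iY ↦ X - iY`. -/
def conjCV {n : ℕ} (v : CV n) : CV n := (v.1, -v.2)

/-- Multiplication of a complexified vector by a complex scalar. -/
def csmul {n : ℕ} (c : ℂ) (v : CV n) : CV n :=
  (c.re • v.1 - c.im • v.2, c.re • v.2 + c.im • v.1)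

/-- `g`, the complex-bilinear extension of the real inner ℂ product. -/
def gC {n : ℕ} (v w : CV n) : ℂ :=
  ((rI v.1 w.1 - rI v.2 w.2 : ℝ) : ℂ) + ((rI v.1 w.2 + rI v.2 w.1 : ℝ) : ℂ) * Complex.I

/-- The flat connection `D` of `ℂ^{n+1}` (componentwise directional derivative),
complex-bilinearly extended: `DD V u p = D_u V (p)`. -/
def DD {n : ℕ} (V : E n → CV n) (u : CV n) (p : E n) : CV n :=
  (fderiv ℝ (fun z => (V z).1) p u.1 - fderiv ℝ (fun z => (V z).2) p u.2,
   fderiv ℝ (fun z => (V z).1) p u.2 + fderiv ℝ (fun z => (V z).2) p u.1)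

/-- The Lie bracket `[U,V]` of complexified fields (for the flat ambient space
it is `D_U V - D_V U`). -/
def bracket {n : ℕ} (U V : E n → CV n) (p : E n) : CV n :=
  DD V (U p) p - DD U (V p) p

/-- Derivative `U f` of a complex function along a complexified vector. -/
def dC {n : ℕ} (f : E n → ℂ) (u : CV n) (p : E n) : ℂ :=
  (fderiv ℝ f p u.1) + Complex.I * (fderiv ℝ f p u.2)

/-- The field `T = J(ν)`, viewed as a complexified field. -/
def TF {n : ℕ} (ν : E n → E n) (z : E n) : CV n := (J (ν z), 0)

/-- The holomorphic unit normal `N = (ν - iT)/√2`. -/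
def NF {n : ℕ} (ν : E n → E n) (z : E n) : CV n :=
  ((Real.sqrt 2)⁻¹ • ν z, -((Real.sqrt 2)⁻¹ • J (ν z)))

/-- The complex-bilinear extension of the second fundamental form:
`h(Z, W) = g(Z, D_W ν)`. -/
def hC {n : ℕ} (ν : E n → E n) (p : E n) (v w : CV n) : ℂ :=
  gC v (fderiv ℝ ν p w.1, fderiv ℝ ν p w.2)

/-- Conjugate of a complexified field. -/
def conjF {n : ℕ} (V : E n → CV n) : E n → CV n := fun z => conjCV (V z)

/-- A holomorphic tangent field `Z = X - iJX`, with `X` a smooth real field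
satisfying `⟪X, ν⟫ = 0` (hermitian orthogonality) at every point of `M`. -/
def IsHoloField {n : ℕ} (M : Set (E n)) (ν : E n → E n) (Z : E n → CV n) : Prop :=
  ContDiff ℝ (⊤ : ℕ∞) (fun z => (Z z).1) ∧
  (∀ z, (Z z).2 = -J ((Z z).1)) ∧
  ∀ p ∈ M, (inner ℂ (ν p) ((Z p).1) : ℂ) = 0

/-- A complexified tangent field: a smooth field whose value at every point of
`M` lies in the complexified tangent space `ℂ T_p M`. -/
def IsCTField {n : ℕ} (M : Set (E n)) (ν : E n → E n) (V : E n → CV n) : Prop :=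
  ContDiff ℝ (⊤ : ℕ∞) (fun z => (V z).1) ∧ ContDiff ℝ (⊤ : ℕ∞) (fun z => (V z).2) ∧
  ∀ p ∈ M, rI (ν p) ((V p).1) = 0 ∧ rI (ν p) ((V p).2) = 0

/-- Projection of a real vector onto the real horizontal space (orthogonal
complement of `ν` and `T = Jν`). -/
def horR {n : ℕ} (ν : E n → E n) (z : E n) (x : E n) : E n :=
  x - rI (ν z) x • ν z - rI (J (ν z)) x • J (ν z)

/-- Projection `Π_H` of a complexified tangent vector onto the holomorphic bundle. -/
def PiH {n : ℕ} (ν : E n → E n) (z : E n) (v : CV n) : CV n :=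
  ((2 : ℝ)⁻¹ • (horR ν z v.1 + J (horR ν z v.2)),
   (2 : ℝ)⁻¹ • (horR ν z v.2 - J (horR ν z v.1)))

/-- Projection `Π_H̄` onto the antiholomorphic bundle. -/
def PiHb {n : ℕ} (ν : E n → E n) (z : E n) (v : CV n) : CV n :=
  ((2 : ℝ)⁻¹ • (horR ν z v.1 - J (horR ν z v.2)),
   (2 : ℝ)⁻¹ • (horR ν z v.2 + J (horR ν z v.1)))

/-- The connection `∇`: writing `V = Z + W̄ + fT` with `Z = Π_H V` holomorphic,
`W̄ = Π_H̄ V` antiholomorphic and `f = g(V, T)`, one sets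
`∇_u V = D_u Z - g(D_u Z, N̄) N + D_u W̄ - g(D_u W̄, N) N̄ + (u f) T`. -/
def nabla {n : ℕ} (ν : E n → E n) (V : E n → CV n) (u : CV n) (p : E n) : CV n :=
  (DD (fun z => PiH ν z (V z)) u p
      - csmul (gC (DD (fun z => PiH ν z (V z)) u p) (conjCV (NF ν p))) (NF ν p))
  + (DD (fun z => PiHb ν z (V z)) u p
      - csmul (gC (DD (fun z => PiHb ν z (V z)) u p) (NF ν p)) (conjCV (NF ν p)))
  + csmul (dC (fun z => gC (V z) (TF ν z)) u p) (TF ν p)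

/-- The torsion `Tor_∇(U,V) = ∇_U V - ∇_V U - [U,V]`. -/
def Tor {n : ℕ} (ν : E n → E n) (U V : E n → CV n) (p : E n) : CV n :=
  nabla ν V (U p) p - nabla ν U (V p) p - bracket U V p

/-- The covariant derivative of the second fundamental form:
`∇_Z h (U, W) = Z h(U,W) - h(∇_Z U, W) - h(U, ∇_Z W)`. -/
def nablaHform {n : ℕ} (ν : E n → E n) (Zf U W : E n → CV n) (p : E n) : ℂ :=
  dC (fun z => hC ν z (U z) (W z)) (Zf p) p
    - hC ν p (nabla ν U (Zf p) p) (W p) - hC ν p (U p) (nabla ν W (Zf p) p)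

section AuxLemmas
variable {n : ℕ}

lemma rI_comm (x y : E n) : rI x y = rI y x := by
  rw [rI, rI, ← inner_conj_symm y x, Complex.conj_re]

lemma rI_smul_left (r : ℝ) (x y : E n) : rI (r • x) y = r * rI x y := by
  rw [rI, rI, ← algebraMap_smul ℂ r x, inner_smul_left]
  simp [Complex.conj_ofReal]

lemma rI_smul_right (r : ℝ) (x y : E n) : rI x (r • y) = r * rI x y := by
  rw [rI, rI, ← algebraMap_smul ℂ r y, inner_smul_right]
  simp

lemma rI_add_left (x y z : E n) : rI (x + y) z = rI x z + rI y z := by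
  simp [rI, inner_add_left]

lemma rI_add_right (x y z : E n) : rI x (y + z) = rI x y + rI x z := by
  simp [rI, inner_add_right]

lemma rI_neg_left (x y : E n) : rI (-x) y = - rI x y := by simp [rI, inner_neg_left]
lemma rI_neg_right (x y : E n) : rI x (-y) = - rI x y := by simp [rI, inner_neg_right]
lemma rI_sub_left (x y z : E n) : rI (x - y) z = rI x z - rI y z := by
  simp [rI, inner_sub_left]
lemma rI_sub_right (x y z : E n) : rI x (y - z) = rI x y - rI x z := by
  simp [rI, inner_sub_right]
lemma rI_zero_left (x : E n) : rI 0 x = 0 := by simp [rI]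
lemma rI_zero_right (x : E n) : rI x 0 = 0 := by simp [rI]

lemma rI_I_left (x y : E n) : rI (Complex.I • x) y = - rI x (Complex.I • y) := by
  simp [rI, inner_smul_left, inner_smul_right, Complex.mul_re]

lemma rI_I_I (x y : E n) : rI x (Complex.I • Complex.I • y) = - rI x y := by
  rw [smul_smul, Complex.I_mul_I, neg_one_smul, rI_neg_right]

lemma rI_I_im (x y : E n) : rI (Complex.I • x) y = (inner ℂ x y : ℂ).im := by
  simp [rI, inner_smul_left, Complex.mul_re]

lemma rI_self (x : E n) : rI x x = ‖x‖ ^ 2 := by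
  rw [rI]; exact inner_self_eq_norm_sq (𝕜 := ℂ) x


end AuxLemmas

section AuxLemmas2
variable {n : ℕ}

lemma exists_curve {M : Set (E n)} {ν : E n → E n} (hsurf : IsHypersurface M ν)
    {p : E n} (hp : p ∈ M) {u : E n} (hu : u ∈ tangAt ν p) :
    ∃ γ : ℝ → E n, γ 0 = p ∧ HasDerivAt γ u 0 ∧ ∀ᶠ t in nhds (0 : ℝ), γ t ∈ M := by
  obtain ⟨hν, hnorm, hloc⟩ := hsurf
  obtain ⟨V, F, hV, hpV, hF, hMV, hker⟩ := hloc p hp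
  have hpMV : p ∈ M ∩ V := ⟨hp, hpV⟩
  have hFp0 : F p = 0 := by
    have h := hMV ▸ hpMV
    exact h.2
  have hFc : ContDiffAt ℝ (⊤ : ℕ∞) F p := hF.contDiffAt (hV.mem_nhds hpV)
  set L : E n →L[ℝ] ℝ := fderiv ℝ F p with hL
  have hLν : L (ν p) ≠ 0 := by
    intro h
    have h2 : rI (ν p) (ν p) = 0 := (hker p hpMV (ν p)).1 h
    rw [rI_self, hnorm p hp] at h2
    norm_num at h2
  have hLu : L u = 0 := (hker p hpMV u).2 hu
  have hFs : HasStrictFDerivAt F L p := hFc.hasStrictFDerivAt (by norm_num)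
  set lam := L (ν p) with hlam
  set s : E n → ℝ := fun z => lam⁻¹ * (F z - (L z - L p)) with hs
  have hss : HasStrictFDerivAt s (0 : E n →L[ℝ] ℝ) p := by
    have h1 : HasStrictFDerivAt (fun z => F z - (L z - L p)) (L - L) p :=
      hFs.sub ((L.hasStrictFDerivAt).sub_const (L p))
    have h2 := h1.const_mul lam⁻¹
    simpa using h2
  set Φ : E n → E n := fun z => z + s z • ν p with hΦdef
  have hΦs : HasStrictFDerivAt Φ
      ((ContinuousLinearEquiv.refl ℝ (E n) : E n ≃L[ℝ] E n) : E n →L[ℝ] E n) p := by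
    have h1 : HasStrictFDerivAt Φ
        ((ContinuousLinearMap.id ℝ (E n)) + (0 : E n →L[ℝ] ℝ).smulRight (ν p)) p :=
      (hasStrictFDerivAt_id p).add (hss.smul_const (ν p))
    have h2 : (ContinuousLinearMap.id ℝ (E n)) + (0 : E n →L[ℝ] ℝ).smulRight (ν p)
        = ((ContinuousLinearEquiv.refl ℝ (E n) : E n ≃L[ℝ] E n) : E n →L[ℝ] E n) := by
      ext v; simp
    rwa [h2] at h1
  have key : ∀ z, L (Φ z - p) = F z := by
    intro z
    have h1 : Φ z - p = (z - p) + s z • ν p := by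
      simp only [hΦdef]; abel
    rw [h1, map_add, map_smul, map_sub, smul_eq_mul, hs]
    field_simp
    rw [hlam]; ring
  have hΦp : Φ p = p := by
    simp [hΦdef, hs, hFp0]
  set Ψ := hΦs.localInverse Φ _ p with hΨdef
  have hΨΦ : Ψ p = p := by
    have h := hΦs.localInverse_apply_image
    rwa [hΦp] at h
  refine ⟨fun t => Ψ (p + t • u), by simpa using hΨΦ, ?_, ?_⟩
  · have h1 : HasFDerivAt Ψ ((ContinuousLinearEquiv.refl ℝ (E n)).symm : E n →L[ℝ] E n) p := by
      have h := hΦs.to_localInverse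
      rw [hΦp] at h
      exact h.hasFDerivAt
    have hline : HasDerivAt (fun t : ℝ => p + t • u) u 0 := by
      have := ((hasDerivAt_id (0 : ℝ)).smul_const u).const_add p
      simpa using this
    have h2 := h1.comp_hasDerivAt_of_eq 0 hline (by simp)
    exact (by simpa using h2 : HasDerivAt (Ψ ∘ fun t : ℝ => p + t • u) u 0)
  · have hΨc : ContinuousAt Ψ p := by
      have h := hΦs.localInverse_continuousAt
      rwa [hΦp] at h
    have hev1 : ∀ᶠ y in nhds p, Φ (Ψ y) = y := by
      have h := hΦs.eventually_right_inverse
      rwa [hΦp] at h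
    have hlinet : Filter.Tendsto (fun t : ℝ => p + t • u) (nhds 0) (nhds p) := by
      have : ContinuousAt (fun t : ℝ => p + t • u) 0 := by fun_prop
      simpa using this.tendsto
    have hγt : Filter.Tendsto (fun t : ℝ => Ψ (p + t • u)) (nhds 0) (nhds p) := by
      have h := hΨc.tendsto.comp hlinet
      rw [hΨΦ] at h
      exact h
    have hevV : ∀ᶠ t in nhds (0 : ℝ), Ψ (p + t • u) ∈ V := hγt (hV.mem_nhds hpV)
    have hev2 : ∀ᶠ t in nhds (0 : ℝ), Φ (Ψ (p + t • u)) = p + t • u := hlinet.eventually hev1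
    filter_upwards [hevV, hev2] with t htV htΦ
    have hF0 : F (Ψ (p + t • u)) = 0 := by
      have h := key (Ψ (p + t • u))
      rw [htΦ] at h
      have h2 : p + t • u - p = t • u := by abel
      rw [h2, map_smul, smul_eq_mul, hLu, mul_zero] at h
      exact h.symm
    have : Ψ (p + t • u) ∈ M ∩ V := by
      rw [hMV]; exact ⟨htV, hF0⟩
    exact this.1
lemma tangDeriv {M : Set (E n)} {ν : E n → E n} (hsurf : IsHypersurface M ν)
    {p : E n} (hp : p ∈ M) {u : E n} (hu : u ∈ tangAt ν p)
    {G : E n → ℝ} {L : E n →L[ℝ] ℝ} (hG : HasFDerivAt G L p)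
    (h0 : ∀ᶠ z in nhds p, z ∈ M → G z = 0) : L u = 0 := by
  obtain ⟨γ, hγ0, hγd, hγM⟩ := exists_curve hsurf hp hu
  have hγt : Filter.Tendsto γ (nhds 0) (nhds p) := by
    have h := hγd.continuousAt
    rwa [ContinuousAt, hγ0] at h
  have h1 : ∀ᶠ t in nhds (0 : ℝ), G (γ t) = 0 := by
    filter_upwards [hγM, hγt.eventually h0] with t h2 h3
    exact h3 h2
  have hd1 : HasDerivAt (fun t => G (γ t)) (L u) 0 := by
    have h := hG.comp_hasDerivAt_of_eq (0 : ℝ) hγd hγ0.symm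
    exact h
  have hd2 : HasDerivAt (fun t => G (γ t)) 0 0 := by
    refine (hasDerivAt_const (0 : ℝ) (0 : ℝ)).congr_of_eventuallyEq ?_
    filter_upwards [h1] with t ht
    exact ht
  exact hd1.unique hd2

lemma tangDerivInner {M : Set (E n)} {ν : E n → E n} (hsurf : IsHypersurface M ν)
    {p : E n} (hp : p ∈ M) {u : E n} (hu : u ∈ tangAt ν p)
    {f g : E n → E n} {f' g' : E n →L[ℝ] E n}
    (hf : HasFDerivAt f f' p) (hg : HasFDerivAt g g' p) {c : ℂ}
    (h0 : ∀ z ∈ M, (inner ℂ (f z) (g z) : ℂ) = c) :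
    (inner ℂ (f p) (g' u) : ℂ) + inner ℂ (f' u) (g p) = 0 := by
  have hin : HasFDerivAt (fun z => (inner ℂ (f z) (g z) : ℂ))
      ((fderivInnerCLM ℂ (f p, g p)).comp (f'.prod g')) p := hf.inner ℂ hg
  have hre : HasFDerivAt (fun z => ((inner ℂ (f z) (g z) : ℂ)).re - c.re)
      (Complex.reCLM.comp ((fderivInnerCLM ℂ (f p, g p)).comp (f'.prod g'))) p :=
    (Complex.reCLM.hasFDerivAt.comp p hin).sub_const c.re
  have him : HasFDerivAt (fun z => ((inner ℂ (f z) (g z) : ℂ)).im - c.im)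
      (Complex.imCLM.comp ((fderivInnerCLM ℂ (f p, g p)).comp (f'.prod g'))) p :=
    (Complex.imCLM.hasFDerivAt.comp p hin).sub_const c.im
  have e1 := tangDeriv hsurf hp hu hre
    (Filter.Eventually.of_forall (fun z hz => by rw [h0 z hz]; ring))
  have e2 := tangDeriv hsurf hp hu him
    (Filter.Eventually.of_forall (fun z hz => by rw [h0 z hz]; ring))
  have h3 : ((fderivInnerCLM ℂ (f p, g p)).comp (f'.prod g')) u = 0 :=
    Complex.ext (by simpa using e1) (by simpa using e2)
  simpa [fderivInnerCLM_apply] using h3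
lemma shape_symm {M : Set (E n)} {ν : E n → E n} (hsurf : IsHypersurface M ν)
    {p : E n} (hp : p ∈ M) {u w : E n} (hu : u ∈ tangAt ν p) (hw : w ∈ tangAt ν p) :
    rI (fderiv ℝ ν p u) w = rI (fderiv ℝ ν p w) u := by
  obtain ⟨V, F, hV, hpV, hF, hMV, hker⟩ := hsurf.2.2 p hp
  have hνd : DifferentiableAt ℝ ν p := (hsurf.1.differentiable (by simp)) p
  have hFc : ContDiffAt ℝ (⊤ : ℕ∞) F p := hF.contDiffAt (hV.mem_nhds hpV)
  have hΦc : ContDiffAt ℝ 1 (fderiv ℝ F) p := hFc.fderiv_right (by exact WithTop.coe_le_coe.2 le_top)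
  have hΦd : DifferentiableAt ℝ (fderiv ℝ F) p := hΦc.differentiableAt one_ne_zero
  set A := fderiv ℝ ν p with hA
  set Φ := fderiv ℝ F with hΦ
  set H := fderiv ℝ Φ p with hH
  have hΦH : HasFDerivAt Φ H p := hΦd.hasFDerivAt
  have hsym : ∀ v q : E n, H v q = H q v := by
    intro v q
    refine second_derivative_symmetric_of_eventually (f := F) ?_ hΦH v q
    filter_upwards [hV.mem_nhds hpV] with z hz
    exact ((hF.contDiffAt (hV.mem_nhds hz)).differentiableAt (by simp)).hasFDerivAt
  have hlam : Φ p (ν p) ≠ 0 := by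
    intro h
    have h2 : rI (ν p) (ν p) = 0 := (hker p ⟨hp, hpV⟩ (ν p)).1 h
    rw [rI_self, hsurf.2.1 p hp] at h2
    norm_num at h2
  have key : ∀ q : E n, q ∈ tangAt ν p → ∀ v : E n, v ∈ tangAt ν p →
      H v q = Φ p (ν p) * rI (A v) q := by
    intro q hq v hv
    have hg1 : HasFDerivAt (fun z => Φ z q)
        ((Φ p).comp (0 : E n →L[ℝ] E n) + H.flip q) p :=
      hΦH.clm_apply (hasFDerivAt_const q p)
    have hg2 : HasFDerivAt (fun z => ((inner ℂ (ν z) q : ℂ)).re)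
        (Complex.reCLM.comp ((fderivInnerCLM ℂ (ν p, q)).comp
          (A.prod (0 : E n →L[ℝ] E n)))) p :=
      Complex.reCLM.hasFDerivAt.comp p (hνd.hasFDerivAt.inner ℂ (hasFDerivAt_const q p))
    have hg3 : HasFDerivAt (fun z => Φ z (ν z)) ((Φ p).comp A + H.flip (ν p)) p :=
      hΦH.clm_apply hνd.hasFDerivAt
    have hG : HasFDerivAt (fun z => Φ z q - ((inner ℂ (ν z) q : ℂ)).re * Φ z (ν z))
        (((Φ p).comp (0 : E n →L[ℝ] E n) + H.flip q) -
          (((inner ℂ (ν p) q : ℂ)).re • ((Φ p).comp A + H.flip (ν p)) +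
            (Φ p (ν p)) • (Complex.reCLM.comp ((fderivInnerCLM ℂ (ν p, q)).comp
              (A.prod (0 : E n →L[ℝ] E n)))))) p := hg1.sub (hg2.mul hg3)
    have h0 : ∀ᶠ z in nhds p, z ∈ M →
        Φ z q - ((inner ℂ (ν z) q : ℂ)).re * Φ z (ν z) = 0 := by
      filter_upwards [hV.mem_nhds hpV] with z hzV hzM
      have hz : z ∈ M ∩ V := ⟨hzM, hzV⟩
      have hν1 : ‖ν z‖ = 1 := hsurf.2.1 z hzM
      have hwt : q - ((inner ℂ (ν z) q : ℂ)).re • ν z ∈ tangAt ν z := by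
        show rI (ν z) (q - ((inner ℂ (ν z) q : ℂ)).re • ν z) = 0
        rw [rI_sub_right, rI_smul_right, rI_self, hν1]
        show rI (ν z) q - rI (ν z) q * 1 ^ 2 = 0
        ring
      have h1 : Φ z (q - ((inner ℂ (ν z) q : ℂ)).re • ν z) = 0 := (hker z hz _).2 hwt
      rw [map_sub, map_smul, smul_eq_mul] at h1
      linarith
    have e := tangDeriv hsurf hp hv hG h0
    have hq0 : ((inner ℂ (ν p) q : ℂ)).re = 0 := hq
    simp only [ContinuousLinearMap.sub_apply, ContinuousLinearMap.add_apply,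
      ContinuousLinearMap.comp_apply, ContinuousLinearMap.zero_apply,
      ContinuousLinearMap.flip_apply, ContinuousLinearMap.smul_apply,
      ContinuousLinearMap.prod_apply, fderivInnerCLM_apply, map_zero, hq0, zero_smul,
      smul_eq_mul, Complex.reCLM_apply, zero_add] at e
    simp only [inner_zero_right, add_zero, zero_add, map_zero] at e
    have : H v q - Φ p (ν p) * (((inner ℂ (ν p) 0 : ℂ)) + (inner ℂ (A v) q : ℂ)).re = 0 := by
      simpa using e
    simp only [inner_zero_right, zero_add] at this
    have : H v q = Φ p (ν p) * (inner ℂ (A v) q : ℂ).re := by linarith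
    exact this
  have h1 := key w hw u hu
  have h2 := key u hu w hw
  rw [hsym u w, h2] at h1
  have := mul_left_cancel₀ hlam h1.symm
  rw [rI, rI]
  exact this

end AuxLemmas2

set_option maxHeartbeats 1000000 in
theorem stmt2 {n : ℕ} (M : Set (E n)) (ν : E n → E n)
    (hsurf : IsHypersurface M ν)
    (Z : E n → CV n) (hZ : IsHoloField M ν Z) :
    ∀ p ∈ M, gC (DD (NF ν) (Z p) p) (conjCV (NF ν p)) = gC (bracket (TF ν) Z p) (TF ν p) := by
  intro p hp
  obtain ⟨hXsm, hZ2, hZperp⟩ := hZ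
  have hν : ContDiff ℝ (⊤ : ℕ∞) ν := hsurf.1
  have hnorm := hsurf.2.1
  have hνd : DifferentiableAt ℝ ν p := (hν.differentiable (by simp)) p
  have hXd : DifferentiableAt ℝ (fun z => (Z z).1) p :=
    (hXsm.differentiable (by simp)) p
  set νp := ν p with hνp
  set X : E n := (Z p).1 with hXdef
  set A := fderiv ℝ ν p with hA
  set B := fderiv ℝ (fun z => (Z z).1) p with hB
  -- tangency facts
  have horth : (inner ℂ νp X : ℂ) = 0 := hZperp p hp
  have htX : X ∈ tangAt ν p := by
    show rI νp X = 0
    rw [rI, horth, Complex.zero_re]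
  have htJX : Complex.I • X ∈ tangAt ν p := by
    show rI νp (Complex.I • X) = 0
    rw [rI, inner_smul_right, horth, mul_zero, Complex.zero_re]
  have htJν : Complex.I • νp ∈ tangAt ν p := by
    show rI νp (Complex.I • νp) = 0
    rw [rI, inner_smul_right, inner_self_eq_norm_sq_to_K]
    simp [← Complex.ofReal_pow]
  -- constraints from ‖ν‖ = 1 on M
  have ha : ∀ u' ∈ tangAt ν p, rI (A u') νp = 0 := by
    intro u' hu'
    have h := tangDerivInner hsurf hp hu' hνd.hasFDerivAt hνd.hasFDerivAt (c := (1 : ℂ))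
      (fun z hz => by
        rw [inner_self_eq_norm_sq_to_K, hnorm z hz]; norm_num)
    have h2 := congrArg Complex.re h
    rw [Complex.add_re, Complex.zero_re] at h2
    have h3 : rI νp (A u') + rI (A u') νp = 0 := h2
    rw [rI_comm νp (A u')] at h3
    linarith
  have ha1 : rI (A X) νp = 0 := ha X htX
  have ha3 : rI (A (Complex.I • X)) νp = 0 := ha (Complex.I • X) htJX
  -- constraint from ⟪ν, X⟫ = 0 on M, direction I • νp
  have hcross : (inner ℂ νp (B (Complex.I • νp)) : ℂ) + inner ℂ (A (Complex.I • νp)) X = 0 :=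
    tangDerivInner hsurf hp htJν hνd.hasFDerivAt hXd.hasFDerivAt (c := (0 : ℂ))
      (fun z hz => hZperp z hz)
  have hb1 : rI (B (Complex.I • νp)) νp = - rI (A X) (Complex.I • νp) := by
    have h2 := congrArg Complex.re hcross
    rw [Complex.add_re, Complex.zero_re] at h2
    have h3 : rI νp (B (Complex.I • νp)) + rI (A (Complex.I • νp)) X = 0 := h2
    rw [rI_comm νp (B (Complex.I • νp)),
      shape_symm hsurf hp htJν htX] at h3
    linarith
  have hb2 : rI (B (Complex.I • νp)) (Complex.I • νp) = rI (A (Complex.I • X)) (Complex.I • νp) := by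
    have h2 := congrArg Complex.im hcross
    rw [Complex.add_im, Complex.zero_im] at h2
    have h3 : rI (Complex.I • νp) (B (Complex.I • νp)) + rI (Complex.I • (A (Complex.I • νp))) X = 0 := by
      rw [rI_I_im, rI_I_im]; exact h2
    rw [rI_comm (Complex.I • νp) (B (Complex.I • νp)), rI_I_left,
      shape_symm hsurf hp htJν htJX] at h3
    linarith
  -- derivative computations
  have hN1 : fderiv ℝ (fun z => (NF ν z).1) p = (Real.sqrt 2)⁻¹ • A := by
    simp only [NF]
    exact (hνd.hasFDerivAt.const_smul ((Real.sqrt 2)⁻¹ : ℝ)).fderiv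
  have hN2 : fderiv ℝ (fun z => (NF ν z).2) p
      = -(((Real.sqrt 2)⁻¹ : ℝ) • (Complex.I • A)) := by
    simp only [NF, J]
    exact (((hνd.hasFDerivAt.const_smul Complex.I).const_smul
      ((Real.sqrt 2)⁻¹ : ℝ)).neg).fderiv
  have hT1 : fderiv ℝ (fun z => (TF ν z).1) p = Complex.I • A := by
    simp only [TF, J]
    exact (hνd.hasFDerivAt.const_smul Complex.I).fderiv
  have hT2 : fderiv ℝ (fun z => (TF ν z).2) p = 0 := by
    simp only [TF]
    exact fderiv_const_apply 0
  have hZ2f : (fun z => (Z z).2) = fun z => -(Complex.I • (Z z).1) := by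
    funext z
    rw [hZ2 z]; rfl
  have hZ2d : fderiv ℝ (fun z => (Z z).2) p = -(Complex.I • B) := by
    rw [hZ2f]
    exact ((hXd.hasFDerivAt.const_smul Complex.I).neg).fderiv
  have hZp1 : (Z p).1 = X := rfl
  have hZp2 : (Z p).2 = -(Complex.I • X) := by rw [hZ2 p]; rfl
  have hs2 : ((Real.sqrt 2)⁻¹ : ℝ) * (Real.sqrt 2)⁻¹ = 1 / 2 := by
    rw [← mul_inv, Real.mul_self_sqrt (by norm_num : (0:ℝ) ≤ 2)]
    norm_num
  have hs2' : ((Real.sqrt 2)⁻¹ : ℝ) ^ 2 = 1 / 2 := by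
    rw [sq]; exact hs2
  have hDDN : DD (NF ν) (Z p) p =
      ((Real.sqrt 2)⁻¹ • (A X) - (Real.sqrt 2)⁻¹ • (Complex.I • (A (Complex.I • X))),
       -((Real.sqrt 2)⁻¹ • (A (Complex.I • X))) - (Real.sqrt 2)⁻¹ • (Complex.I • (A X))) := by
    rw [DD, hN1, hN2, hZp1, hZp2]
    rw [Prod.ext_iff]
    constructor <;>
      · simp only [ContinuousLinearMap.smul_apply, ContinuousLinearMap.neg_apply,
          ContinuousLinearMap.zero_apply, map_neg, map_smul]
        module
  have hTFp : TF ν p = (Complex.I • νp, 0) := rfl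
  have hBR : bracket (TF ν) Z p =
      (B (Complex.I • νp) - Complex.I • (A X),
       -(Complex.I • (B (Complex.I • νp))) + Complex.I • (A (Complex.I • X))) := by
    rw [bracket, DD, DD, hT1, hT2, hZ2d, hZp1, hZp2, hTFp]
    rw [Prod.ext_iff]
    constructor
    · simp only [Prod.mk_sub_mk, Prod.fst_sub, Prod.snd_sub,
        ContinuousLinearMap.smul_apply, ContinuousLinearMap.neg_apply,
        ContinuousLinearMap.zero_apply, ← hB, map_zero, smul_zero, neg_zero,
        sub_zero, add_zero, zero_add, neg_neg]
    · simp only [Prod.mk_sub_mk, Prod.fst_sub, Prod.snd_sub,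
        ContinuousLinearMap.smul_apply, ContinuousLinearMap.neg_apply,
        ContinuousLinearMap.zero_apply, ← hB, map_zero, smul_zero, neg_zero,
        sub_zero, add_zero, zero_add, neg_neg, map_neg, smul_neg]
      abel
  have hCNF : conjCV (NF ν p) = ((Real.sqrt 2)⁻¹ • νp, (Real.sqrt 2)⁻¹ • (Complex.I • νp)) := by
    simp [conjCV, NF, J, hνp]
  rw [hDDN, hBR, hCNF, hTFp, gC, gC]
  rw [Complex.ext_iff]
  simp only [Complex.add_re, Complex.add_im, Complex.mul_re, Complex.mul_im,
    Complex.ofReal_re, Complex.ofReal_im, Complex.I_re, Complex.I_im]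
  simp only [rI_sub_left, rI_sub_right, rI_add_left, rI_add_right, rI_neg_left,
    rI_neg_right, rI_smul_left, rI_smul_right, rI_zero_left, rI_zero_right,
    rI_I_left, rI_I_I, smul_neg, neg_neg]
  constructor
  · ring_nf
    simp only [hs2']
    ring_nf
    linarith [ha1, ha3, hb1, hb2]
  · ring_nf
    simp only [hs2']
    ring_nf
    linarith [ha1, ha3, hb1, hb2]
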